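/- Let G be a group, K the complete graph with vertex set G, on which G acts by left multiplication (extended affinely over edges), and let H be a geodesic space with Δ-thin triangles. Let ρ : G → Isom(H) be a homomorphism and ι : K → H a ρ-equivariant straight map. Then the action σ of G on K preserves the pullback pseudo-metric d = ι*d_H, and for every g ∈ G, |t(σg) − t(ρg)| ≤ 28Δ, where t denotes translation length (with respect to d on K and d_H on H respectively). -/

import Mathlib

open Set Filter Metric

section Common

variable {H : Type*} [MetricSpace H]

/-- `γ` parametrizes a geodesic from `a` to `b` by arclength on `[0, dist a b]`. -/
def IsGeodesicSegment (γ : ℝ → H) (a b : H) : Prop :=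
  γ 0 = a ∧ γ (dist a b) = b ∧
    ∀ s ∈ Set.Icc (0:ℝ) (dist a b), ∀ t ∈ Set.Icc (0:ℝ) (dist a b),
      dist (γ s) (γ t) = |s - t|

/-- A geodesic space: every pair of points is joined by a geodesic. -/
def GeodesicSpace (H : Type*) [MetricSpace H] : Prop :=
  ∀ a b : H, ∃ γ : ℝ → H, IsGeodesicSegment γ a b

/-- The image of a geodesic segment from `a` to `b`. -/
def segImage (γ : ℝ → H) (a b : H) : Set H :=
  γ '' Set.Icc 0 (dist a b)

/-- A space has `Δ`-thin triangles if each side of every geodesic triangle is contained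
in the `Δ`-neighborhood of the union of the other two sides. -/
def ThinTriangles (H : Type*) [MetricSpace H] (Δ : ℝ) : Prop :=
  ∀ a b c : H, ∀ γab γbc γca : ℝ → H,
    IsGeodesicSegment γab a b → IsGeodesicSegment γbc b c → IsGeodesicSegment γca c a →
      ∀ x ∈ segImage γab a b, ∃ y ∈ segImage γbc b c ∪ segImage γca c a, dist x y ≤ Δ

/-- An arc from `a` to `b`, parametrized (injectively and continuously) by `[0,1]`. -/
def IsArcParam (α : ℝ → H) (a b : H) : Prop :=
  ContinuousOn α (Set.Icc 0 1) ∧ Set.InjOn α (Set.Icc 0 1) ∧ α 0 = a ∧ α 1 = b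

/-- An `ℝ`-tree: a metric space in which every pair of points is joined by a geodesic
(so it is a path-metric space and arcs are isometric to intervals of `ℝ`) and in which
the arc joining two points is unique. -/
def IsRTree (X : Type*) [MetricSpace X] : Prop :=
  (∀ a b : X, ∃ γ : ℝ → X, IsGeodesicSegment γ a b) ∧
  ∀ a b : X, ∀ α β : ℝ → X, IsArcParam α a b → IsArcParam β a b →
    α '' Set.Icc 0 1 = β '' Set.Icc 0 1

/-- The translation length of an isometry. -/
noncomputable def translationLength {X : Type*} [MetricSpace X] (τ : X ≃ᵢ X) : ℝ :=
  ⨅ x : X, dist x (τ x)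

/-- The core of an isometry of an `ℝ`-tree: points moved the minimal distance. -/
def isomCore {X : Type*} [MetricSpace X] (τ : X ≃ᵢ X) : Set X :=
  {x : X | dist x (τ x) = translationLength τ}

/-- An elliptic isometry: one having a fixed point. -/
def IsElliptic {X : Type*} [MetricSpace X] (τ : X ≃ᵢ X) : Prop :=
  ∃ x, τ x = x

/-- A hyperbolic isometry of an `ℝ`-tree: positive translation length, with core
isometric to the real line (its axis). -/
def IsHyperbolicIsom {X : Type*} [MetricSpace X] (τ : X ≃ᵢ X) : Prop :=
  0 < translationLength τ ∧
    ∃ e : ℝ → X, (∀ s t : ℝ, dist (e s) (e t) = |s - t|) ∧ Set.range e = isomCore τ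

/-- A metric simplicial tree: an `ℝ`-tree together with a closed discrete set `V` of
vertices such that each connected component of the complement of `V` is an open edge:
it is the interior of a geodesic segment of positive length with endpoints in `V`. -/
def IsMetricSimplicialTree (X : Type*) [MetricSpace X] : Prop :=
  IsRTree X ∧
    ∃ V : Set X, IsClosed V ∧
      (∀ v ∈ V, ∃ ε > 0, ∀ w ∈ V, dist v w < ε → w = v) ∧
      ∀ x ∈ Vᶜ, ∃ L > (0:ℝ), ∃ f : ℝ → X,
        (∀ s ∈ Set.Icc (0:ℝ) L, ∀ t ∈ Set.Icc (0:ℝ) L, dist (f s) (f t) = |s - t|) ∧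
        f '' Set.Ioo 0 L = connectedComponentIn Vᶜ x ∧ f 0 ∈ V ∧ f L ∈ V

end Common

section AuxGeo
variable {H : Type*} [MetricSpace H]

lemma IsGeodesicSegment.dist_from_start {γ : ℝ → H} {a b : H}
    (h : IsGeodesicSegment γ a b) {s : ℝ} (hs : s ∈ Set.Icc 0 (dist a b)) :
    dist a (γ s) = s := by
  have h0 : (0:ℝ) ∈ Set.Icc (0:ℝ) (dist a b) := ⟨le_refl _, dist_nonneg⟩
  have h2 := h.2.2 0 h0 s hs
  rw [h.1] at h2
  rw [h2, zero_sub, abs_neg, abs_of_nonneg hs.1]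

lemma IsGeodesicSegment.dist_to_end {γ : ℝ → H} {a b : H}
    (h : IsGeodesicSegment γ a b) {s : ℝ} (hs : s ∈ Set.Icc 0 (dist a b)) :
    dist (γ s) b = dist a b - s := by
  have hD : dist a b ∈ Set.Icc (0:ℝ) (dist a b) := ⟨dist_nonneg, le_refl _⟩
  have h2 := h.2.2 s hs (dist a b) hD
  rw [h.2.1] at h2
  rw [h2, abs_of_nonpos (by linarith [hs.2]), neg_sub]

lemma geodesicSegment_const (b : H) : IsGeodesicSegment (fun _ => b) b b := by
  refine ⟨rfl, rfl, fun s hs t ht => ?_⟩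
  rw [dist_self] at hs ht ⊢
  have : s = 0 := le_antisymm hs.2 hs.1
  have : t = 0 := le_antisymm ht.2 ht.1
  simp [*]

lemma IsGeodesicSegment.reverse {γ : ℝ → H} {a b : H} (h : IsGeodesicSegment γ a b) :
    IsGeodesicSegment (fun s => γ (dist a b - s)) b a := by
  refine ⟨by simpa using h.2.1, ?_, fun s hs t ht => ?_⟩
  · rw [dist_comm b a]; simpa using h.1
  · rw [dist_comm b a] at hs ht
    have h2 := h.2.2 (dist a b - s) ⟨by linarith [hs.2], by linarith [hs.1]⟩
      (dist a b - t) ⟨by linarith [ht.2], by linarith [ht.1]⟩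
    rw [h2]
    rw [show dist a b - s - (dist a b - t) = -(s - t) by ring, abs_neg]

lemma IsGeodesicSegment.isom_comp {γ : ℝ → H} {a b : H} (τ : H ≃ᵢ H)
    (h : IsGeodesicSegment γ a b) :
    IsGeodesicSegment (fun s => τ (γ s)) (τ a) (τ b) := by
  have hd : dist (τ a) (τ b) = dist a b := τ.dist_eq a b
  refine ⟨congrArg τ h.1, ?_, fun s hs t ht => ?_⟩
  · show τ (γ (dist (τ a) (τ b))) = τ b
    rw [hd, h.2.1]
  · rw [hd] at hs ht
    show dist (τ (γ s)) (τ (γ t)) = |s - t|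
    rw [τ.dist_eq, h.2.2 s hs t ht]

/-- Concatenating geodesics through an intermediate point `z` with
`dist a z + dist z b = dist a b` yields a geodesic from `a` to `b` through `z`. -/
lemma geodesic_concat (hgeo : GeodesicSpace H) {a b z : H} {u : ℝ}
    (hu : u ∈ Set.Icc 0 (dist a b)) (h1 : dist a z = u) (h2 : dist z b = dist a b - u) :
    ∃ γ : ℝ → H, IsGeodesicSegment γ a b ∧ γ u = z := by
  set D := dist a b with hDdef
  obtain ⟨σ₁, hσ₁⟩ := hgeo a z
  obtain ⟨σ₂, hσ₂⟩ := hgeo z b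
  refine ⟨fun s => if s ≤ u then σ₁ s else σ₂ (s - u), ?_, ?_⟩
  · have da : ∀ s ∈ Set.Icc (0:ℝ) D, dist a (if s ≤ u then σ₁ s else σ₂ (s - u)) = s := by
      intro s hs
      by_cases hsu : s ≤ u
      · rw [if_pos hsu]
        exact hσ₁.dist_from_start ⟨hs.1, by rw [h1]; exact hsu⟩
      · rw [if_neg hsu]
        push_neg at hsu
        have hm : s - u ∈ Set.Icc (0:ℝ) (dist z b) :=
          ⟨by linarith, by rw [h2]; linarith [hs.2]⟩
        have hle : dist a (σ₂ (s - u)) ≤ s := by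
          calc dist a (σ₂ (s - u)) ≤ dist a z + dist z (σ₂ (s - u)) := dist_triangle _ _ _
            _ = u + (s - u) := by rw [h1, hσ₂.dist_from_start hm]
            _ = s := by ring
        have hge : s ≤ dist a (σ₂ (s - u)) := by
          have h3 := hσ₂.dist_to_end hm
          rw [h2] at h3
          have h4 : dist a b ≤ dist a (σ₂ (s - u)) + dist (σ₂ (s - u)) b :=
            dist_triangle _ _ _
          rw [h3] at h4
          have he : D - u - (s - u) = D - s := by ring
          rw [he] at h4
          linarith
        linarith
    have db : ∀ s ∈ Set.Icc (0:ℝ) D, dist (if s ≤ u then σ₁ s else σ₂ (s - u)) b = D - s := by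
      intro s hs
      by_cases hsu : s ≤ u
      · rw [if_pos hsu]
        have hle : dist (σ₁ s) b ≤ D - s := by
          calc dist (σ₁ s) b ≤ dist (σ₁ s) z + dist z b := dist_triangle _ _ _
            _ = (u - s) + (D - u) := by
                have h3 := hσ₁.dist_to_end (s := s) ⟨hs.1, by rw [h1]; exact hsu⟩
                rw [h1] at h3
                rw [h3, h2]
            _ = D - s := by ring
        have hge : D - s ≤ dist (σ₁ s) b := by
          have h4 : dist a b ≤ dist a (σ₁ s) + dist (σ₁ s) b := dist_triangle _ _ _
          rw [hσ₁.dist_from_start ⟨hs.1, by rw [h1]; exact hsu⟩] at h4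
          linarith
        linarith
      · rw [if_neg hsu]
        push_neg at hsu
        have hm : s - u ∈ Set.Icc (0:ℝ) (dist z b) :=
          ⟨by linarith, by rw [h2]; linarith [hs.2]⟩
        have h3 := hσ₂.dist_to_end hm
        rw [h2] at h3
        rw [h3]; ring
    have key : ∀ s ∈ Set.Icc (0:ℝ) D, ∀ t ∈ Set.Icc (0:ℝ) D, s ≤ t →
        dist (if s ≤ u then σ₁ s else σ₂ (s - u)) (if t ≤ u then σ₁ t else σ₂ (t - u))
          = t - s := by
      intro s hs t ht hst
      by_cases htu : t ≤ u
      · rw [if_pos (le_trans hst htu), if_pos htu]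
        rw [hσ₁.2.2 s ⟨hs.1, by rw [h1]; exact le_trans hst htu⟩
            t ⟨ht.1, by rw [h1]; exact htu⟩,
          abs_of_nonpos (by linarith), neg_sub]
      · by_cases hsu : s ≤ u
        · rw [if_pos hsu, if_neg htu]
          push_neg at htu
          have hm : t - u ∈ Set.Icc (0:ℝ) (dist z b) :=
            ⟨by linarith, by rw [h2]; linarith [ht.2]⟩
          have hs1 : s ∈ Set.Icc (0:ℝ) (dist a z) := ⟨hs.1, by rw [h1]; exact hsu⟩
          have hle : dist (σ₁ s) (σ₂ (t - u)) ≤ t - s := by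
            have h5 := hσ₁.dist_to_end hs1
            rw [h1] at h5
            calc dist (σ₁ s) (σ₂ (t - u)) ≤ dist (σ₁ s) z + dist z (σ₂ (t - u)) :=
                dist_triangle _ _ _
              _ = (u - s) + (t - u) := by rw [h5, hσ₂.dist_from_start hm]
              _ = t - s := by ring
          have hge : t - s ≤ dist (σ₁ s) (σ₂ (t - u)) := by
            have h6 := hσ₂.dist_to_end hm
            rw [h2] at h6
            have h4 : dist a b ≤ dist a (σ₁ s) + (dist (σ₁ s) (σ₂ (t - u)) +
                dist (σ₂ (t - u)) b) := dist_triangle4 a (σ₁ s) (σ₂ (t - u)) b |>.trans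
                  (by rw [add_assoc])
            rw [hσ₁.dist_from_start hs1, h6] at h4
            have he : D - u - (t - u) = D - t := by ring
            rw [he] at h4
            linarith
          linarith
        · rw [if_neg hsu, if_neg htu]
          push_neg at hsu htu
          have hms : s - u ∈ Set.Icc (0:ℝ) (dist z b) :=
            ⟨by linarith, by rw [h2]; linarith [hs.2]⟩
          have hmt : t - u ∈ Set.Icc (0:ℝ) (dist z b) :=
            ⟨by linarith, by rw [h2]; linarith [ht.2]⟩
          rw [hσ₂.2.2 _ hms _ hmt, abs_of_nonpos (by linarith), neg_sub]
          ring
    refine ⟨?_, ?_, fun s hs t ht => ?_⟩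
    · show (if (0:ℝ) ≤ u then σ₁ 0 else σ₂ (0 - u)) = a
      rw [if_pos hu.1]; exact hσ₁.1
    · show (if D ≤ u then σ₁ D else σ₂ (D - u)) = b
      by_cases hDu : D ≤ u
      · have huD : u = D := le_antisymm hu.2 hDu
        rw [if_pos hDu]
        have hz : dist z b = 0 := by rw [h2, huD]; ring
        have hzb : z = b := by rwa [dist_eq_zero] at hz
        rw [← huD, ← h1, hσ₁.2.1, hzb]
      · rw [if_neg hDu]
        rw [← h2]
        exact hσ₂.2.1
    · rcases le_total s t with h' | h'
      · rw [key s hs t ht h', abs_of_nonpos (by linarith), neg_sub]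
      · rw [dist_comm, key t ht s hs h', abs_of_nonneg (by linarith)]
  · show (if u ≤ u then σ₁ u else σ₂ (u - u)) = z
    rw [if_pos le_rfl, ← h1]
    exact hσ₁.2.1

/-- Any two geodesics between the same endpoints are pointwise `2Δ`-close. -/
lemma two_geodesics {Δ : ℝ} (_hΔ : 0 ≤ Δ) (hthin : ThinTriangles H Δ) {a b : H}
    {γ γ' : ℝ → H} (hγ : IsGeodesicSegment γ a b) (hγ' : IsGeodesicSegment γ' a b)
    {u : ℝ} (hu : u ∈ Set.Icc 0 (dist a b)) :
    dist (γ' u) (γ u) ≤ 2 * Δ := by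
  obtain ⟨y, hy, hdy⟩ := hthin a b b γ' (fun _ => b) (fun s => γ (dist a b - s)) hγ'
    (geodesicSegment_const b) hγ.reverse (γ' u) ⟨u, hu, rfl⟩
  have hyform : ∃ w ∈ Set.Icc (0:ℝ) (dist a b), y = γ w := by
    rcases hy with hy | hy
    · obtain ⟨s, _, rfl⟩ := hy
      exact ⟨dist a b, ⟨dist_nonneg, le_refl _⟩, hγ.2.1.symm⟩
    · obtain ⟨s, hsmem, rfl⟩ := hy
      rw [dist_comm b a] at hsmem
      exact ⟨dist a b - s, ⟨by linarith [hsmem.2], by linarith [hsmem.1]⟩, rfl⟩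
  obtain ⟨w, hw, rfl⟩ := hyform
  have h1 : dist a (γ w) = w := hγ.dist_from_start hw
  have h2 : dist a (γ' u) = u := hγ'.dist_from_start hu
  have h3 : |w - u| ≤ Δ := by
    have hdy' : dist (γ w) (γ' u) ≤ Δ := by rw [dist_comm]; exact hdy
    have h5 := abs_dist_sub_le (γ w) (γ' u) a
    rw [dist_comm (γ w) a, dist_comm (γ' u) a, h1, h2] at h5
    linarith [h5.trans hdy']
  have h4 : dist (γ w) (γ u) = |w - u| := hγ.2.2 w hw u hu
  calc dist (γ' u) (γ u) ≤ dist (γ' u) (γ w) + dist (γ w) (γ u) := dist_triangle _ _ _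
    _ ≤ Δ + Δ := by rw [h4]; exact add_le_add hdy h3
    _ = 2 * Δ := by ring

end AuxGeo

/-- Key geometric lemma: some point on a geodesic from `a` to `τ a` is displaced by
`τ` at most `dist x (τ x) + 18Δ`, for any `x`. -/
lemma exists_small_displacement {H : Type*} [MetricSpace H] {Δ : ℝ} (hΔ : 0 < Δ)
    (hgeo : GeodesicSpace H) (hthin : ThinTriangles H Δ) (τ : H ≃ᵢ H) {a : H}
    {γ : ℝ → H} (hγ : IsGeodesicSegment γ a (τ a)) (x : H) :
    ∃ u ∈ Set.Icc (0:ℝ) (dist a (τ a)),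
      dist (γ u) (τ (γ u)) ≤ dist x (τ x) + 18 * Δ := by
  set D := dist a (τ a) with hD
  set ℓ := dist x (τ x) with hℓ
  set r := dist x a with hr
  obtain ⟨α, hα⟩ := hgeo x a
  obtain ⟨δ, hδ⟩ := hgeo (τ a) x
  obtain ⟨β, hβ⟩ := hgeo x (τ x)
  have hτα : IsGeodesicSegment (fun s => τ (α s)) (τ x) (τ a) := hα.isom_comp τ
  set S₁ : Set H := segImage α x a with hS₁
  set S₂ : Set H := segImage β x (τ x) with hS₂
  set S₃ : Set H := segImage (fun s => τ (α s)) (τ x) (τ a) with hS₃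
  have hS₁ne : S₁.Nonempty := ⟨α 0, 0, ⟨le_refl _, dist_nonneg⟩, rfl⟩
  have hS₂ne : S₂.Nonempty := ⟨β 0, 0, ⟨le_refl _, dist_nonneg⟩, rfl⟩
  have hS₃ne : S₃.Nonempty := ⟨τ (α 0), 0, ⟨le_refl _, dist_nonneg⟩, rfl⟩
  -- the covering property
  have cover : ∀ u ∈ Set.Icc (0:ℝ) D,
      infDist (γ u) S₁ ≤ 2 * Δ ∨ infDist (γ u) S₂ ≤ 2 * Δ ∨ infDist (γ u) S₃ ≤ 2 * Δ := by
    intro u hu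
    obtain ⟨y, hy, hdy⟩ := hthin a (τ a) x γ δ α hγ hδ hα (γ u) ⟨u, hu, rfl⟩
    rcases hy with hy | hy
    · -- y on the side from τ a to x : apply thinness again
      obtain ⟨y', hy', hdy'⟩ := hthin (τ a) x (τ x) δ β (fun s => τ (α s)) hδ hβ hτα y hy
      have hle : dist (γ u) y' ≤ 2 * Δ := by
        calc dist (γ u) y' ≤ dist (γ u) y + dist y y' := dist_triangle _ _ _
          _ ≤ Δ + Δ := add_le_add hdy hdy'
          _ = 2 * Δ := by ring
      rcases hy' with hy' | hy'
      · exact Or.inr (Or.inl ((infDist_le_dist_of_mem hy').trans hle))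
      · exact Or.inr (Or.inr ((infDist_le_dist_of_mem hy').trans hle))
    · exact Or.inl ((infDist_le_dist_of_mem hy).trans (hdy.trans (by linarith)))
  by_cases hA : ∃ u ∈ Set.Icc (0:ℝ) D, infDist (γ u) S₂ ≤ 2 * Δ
  · -- case A: γ u is close to the geodesic from x to τ x
    obtain ⟨u, hu, h2⟩ := hA
    refine ⟨u, hu, ?_⟩
    obtain ⟨y, hy, hdy⟩ := (infDist_lt_iff hS₂ne).mp (lt_of_le_of_lt h2 (by linarith : (2:ℝ) * Δ < 3 * Δ))
    obtain ⟨s, hs, rfl⟩ := hy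
    have d1 : dist (β s) (τ x) = ℓ - s := hβ.dist_to_end hs
    have d2 : dist x (β s) = s := hβ.dist_from_start hs
    have d3 : dist (β s) (τ (β s)) ≤ ℓ := by
      calc dist (β s) (τ (β s)) ≤ dist (β s) (τ x) + dist (τ x) (τ (β s)) :=
          dist_triangle _ _ _
        _ = (ℓ - s) + s := by rw [d1, τ.dist_eq, d2]
        _ = ℓ := by ring
    calc dist (γ u) (τ (γ u))
        ≤ dist (γ u) (β s) + dist (β s) (τ (β s)) + dist (τ (β s)) (τ (γ u)) :=
          dist_triangle4 _ _ _ _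
      _ ≤ 3 * Δ + ℓ + 3 * Δ := by
          refine add_le_add (add_le_add hdy.le d3) ?_
          rw [τ.dist_eq, dist_comm]
          exact hdy.le
      _ ≤ ℓ + 18 * Δ := by linarith
  · -- case B
    push_neg at hA
    have cover' : ∀ u ∈ Set.Icc (0:ℝ) D,
        infDist (γ u) S₁ ≤ 2 * Δ ∨ infDist (γ u) S₃ ≤ 2 * Δ := by
      intro u hu
      rcases cover u hu with h | h | h
      · exact Or.inl h
      · exact absurd h (not_le.mpr (hA u hu))
      · exact Or.inr h
    set A : Set ℝ := {w | w ∈ Set.Icc (0:ℝ) D ∧ infDist (γ w) S₁ ≤ 2 * Δ} with hAdef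
    have haS₁ : a ∈ S₁ := ⟨dist x a, ⟨dist_nonneg, le_refl _⟩, hα.2.1⟩
    have h0A : (0:ℝ) ∈ A := by
      refine ⟨⟨le_refl _, dist_nonneg⟩, ?_⟩
      rw [hγ.1, infDist_zero_of_mem haS₁]
      linarith
    have hAne : A.Nonempty := ⟨0, h0A⟩
    have hAbdd : BddAbove A := ⟨D, fun w hw => hw.1.2⟩
    set u := sSup A with hudef
    have huIcc : u ∈ Set.Icc (0:ℝ) D :=
      ⟨le_csSup hAbdd h0A, csSup_le hAne fun w hw => hw.1.2⟩
    have lip : ∀ S : Set H, ∀ v ∈ Set.Icc (0:ℝ) D, ∀ w ∈ Set.Icc (0:ℝ) D,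
        infDist (γ v) S ≤ infDist (γ w) S + |v - w| := by
      intro S v hv w hw
      have h5 := infDist_le_infDist_add_dist (x := γ v) (y := γ w) (s := S)
      rwa [hγ.2.2 v hv w hw] at h5
    have hF1 : infDist (γ u) S₁ ≤ 2 * Δ := by
      refine le_of_forall_pos_le_add fun ε hε => ?_
      obtain ⟨w, hwA, hlt⟩ := exists_lt_of_lt_csSup hAne (by linarith : u - ε < u)
      have hwle : w ≤ u := le_csSup hAbdd hwA
      have h5 := lip S₁ u huIcc w hwA.1
      have habs : |u - w| ≤ ε := by rw [abs_of_nonneg (by linarith)]; linarith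
      linarith [hwA.2]
    have hF3 : infDist (γ u) S₃ ≤ 2 * Δ := by
      rcases eq_or_lt_of_le huIcc.2 with hDu | hDu
      · have hγu : γ u = τ a := by rw [hDu]; exact hγ.2.1
        have hmem : τ a ∈ S₃ := by
          refine ⟨dist x a, by rw [τ.dist_eq]; exact ⟨dist_nonneg, le_refl _⟩, ?_⟩
          show τ (α (dist x a)) = τ a
          rw [hα.2.1]
        rw [hγu, infDist_zero_of_mem hmem]
        linarith
      · refine le_of_forall_pos_le_add fun ε hε => ?_
        set v := min (u + ε) D with hvdef
        have hvIcc : v ∈ Set.Icc (0:ℝ) D :=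
          ⟨le_min (by linarith [huIcc.1]) (by linarith [huIcc.1]), min_le_right _ _⟩
        have hvu : u < v := lt_min (by linarith) hDu
        have hvA : v ∉ A := fun hc => absurd (le_csSup hAbdd hc) (not_le.mpr hvu)
        have h1 : ¬ infDist (γ v) S₁ ≤ 2 * Δ := fun hc => hvA ⟨hvIcc, hc⟩
        have h3 : infDist (γ v) S₃ ≤ 2 * Δ := (cover' v hvIcc).resolve_left h1
        have habs : |u - v| ≤ ε := by
          rw [abs_of_nonpos (by linarith)]
          have := min_le_left (u + ε) D
          linarith
        linarith [lip S₃ u huIcc v hvIcc]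
    obtain ⟨y₁, hy₁, hdy₁⟩ :=
      (infDist_lt_iff hS₁ne).mp (lt_of_le_of_lt hF1 (by linarith : (2:ℝ) * Δ < 3 * Δ))
    obtain ⟨s₁, hs₁, rfl⟩ := hy₁
    obtain ⟨y₃, hy₃, hdy₃⟩ :=
      (infDist_lt_iff hS₃ne).mp (lt_of_le_of_lt hF3 (by linarith : (2:ℝ) * Δ < 3 * Δ))
    obtain ⟨s₃, hs₃, rfl⟩ := hy₃
    have hdy₃' : dist (γ u) (τ (α s₃)) < 3 * Δ := hdy₃
    have hs₃' : s₃ ∈ Set.Icc (0:ℝ) (dist x a) := by rwa [τ.dist_eq] at hs₃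
    have e1 : dist x (α s₁) = s₁ := hα.dist_from_start hs₁
    have e3 : dist x (α s₃) = s₃ := hα.dist_from_start hs₃'
    have d13 : dist (α s₁) (τ (α s₃)) ≤ 6 * Δ := by
      calc dist (α s₁) (τ (α s₃)) ≤ dist (α s₁) (γ u) + dist (γ u) (τ (α s₃)) :=
          dist_triangle _ _ _
        _ ≤ 3 * Δ + 3 * Δ := by
            refine add_le_add ?_ hdy₃'.le
            rw [dist_comm]; exact hdy₁.le
        _ = 6 * Δ := by ring
    have bnd1 : s₁ ≤ ℓ + s₃ + 6 * Δ := by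
      have h5 : dist x (τ (α s₃)) ≤ ℓ + s₃ := by
        calc dist x (τ (α s₃)) ≤ dist x (τ x) + dist (τ x) (τ (α s₃)) := dist_triangle _ _ _
          _ = ℓ + s₃ := by rw [τ.dist_eq, e3, ← hℓ]
      calc s₁ = dist x (α s₁) := e1.symm
        _ ≤ dist x (τ (α s₃)) + dist (τ (α s₃)) (α s₁) := dist_triangle _ _ _
        _ ≤ (ℓ + s₃) + 6 * Δ := add_le_add h5 (by rw [dist_comm]; exact d13)
        _ = ℓ + s₃ + 6 * Δ := by ring
    have bnd2 : s₃ ≤ ℓ + s₁ + 6 * Δ := by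
      have h5 : dist (τ x) (α s₁) ≤ ℓ + s₁ := by
        calc dist (τ x) (α s₁) ≤ dist (τ x) x + dist x (α s₁) := dist_triangle _ _ _
          _ = ℓ + s₁ := by rw [dist_comm (τ x) x, e1, ← hℓ]
      calc s₃ = dist (τ x) (τ (α s₃)) := by rw [τ.dist_eq, e3]
        _ ≤ dist (τ x) (α s₁) + dist (α s₁) (τ (α s₃)) := dist_triangle _ _ _
        _ ≤ (ℓ + s₁) + 6 * Δ := add_le_add h5 d13
        _ = ℓ + s₁ + 6 * Δ := by ring
    have dists : dist (α s₃) (α s₁) = |s₃ - s₁| := hα.2.2 s₃ hs₃' s₁ hs₁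
    have habs : |s₃ - s₁| ≤ ℓ + 6 * Δ := abs_le.mpr ⟨by linarith, by linarith⟩
    have disp1 : dist (α s₁) (τ (α s₁)) ≤ ℓ + 12 * Δ := by
      calc dist (α s₁) (τ (α s₁))
          ≤ dist (α s₁) (τ (α s₃)) + dist (τ (α s₃)) (τ (α s₁)) := dist_triangle _ _ _
        _ ≤ 6 * Δ + |s₃ - s₁| := add_le_add d13 (le_of_eq (by rw [τ.dist_eq, dists]))
        _ ≤ ℓ + 12 * Δ := by linarith
    refine ⟨u, huIcc, ?_⟩
    calc dist (γ u) (τ (γ u))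
        ≤ dist (γ u) (α s₁) + dist (α s₁) (τ (α s₁)) + dist (τ (α s₁)) (τ (γ u)) :=
          dist_triangle4 _ _ _ _
      _ ≤ 3 * Δ + (ℓ + 12 * Δ) + 3 * Δ := by
          refine add_le_add (add_le_add hdy₁.le disp1) ?_
          rw [τ.dist_eq, dist_comm]
          exact hdy₁.le
      _ ≤ ℓ + 18 * Δ := by linarith


open scoped Classical

section CompleteGraph

/-- The convex combination `(1-t)·δ_u + t·δ_v` of two Dirac functions on `G`. -/
noncomputable def deltaComb {G : Type*} (u v : G) (t : ℝ) : G → ℝ :=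
  fun x => (1 - t) * (if x = u then 1 else 0) + t * (if x = v then 1 else 0)

/-- The geometric realization of the complete graph `K(G)` with vertex set `G`:
all convex combinations of two Dirac functions; `deltaComb u v t` is the point at
parameter `t` on the edge joining the vertices `u` and `v`. -/
def KG (G : Type*) : Type _ :=
  {f : G → ℝ // ∃ u v : G, ∃ t : ℝ, t ∈ Set.Icc (0:ℝ) 1 ∧ f = deltaComb u v t}

/-- The point at parameter `t ∈ [0,1]` on the edge of `K(G)` joining `u` to `v`. -/
noncomputable def kpt {G : Type*} (u v : G) (t : ℝ) (ht : t ∈ Set.Icc (0:ℝ) 1) : KG G :=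
  ⟨deltaComb u v t, u, v, t, ht, rfl⟩

/-- The vertex of `K(G)` corresponding to `g : G`. -/
noncomputable def vtx {G : Type*} (g : G) : KG G :=
  kpt g g 0 ⟨le_refl _, zero_le_one⟩

/-- The action of `G` on `K(G)` by left multiplication on the vertices, extended
affinely over the edges. -/
noncomputable def leftMulKG {G : Type*} [Group G] (g : G) (p : KG G) : KG G :=
  ⟨fun x => p.1 (g⁻¹ * x), by
    obtain ⟨u, v, t, ht, hf⟩ := p.2
    refine ⟨g * u, g * v, t, ht, ?_⟩
    funext x
    rw [hf]
    simp [deltaComb, inv_mul_eq_iff_eq_mul]⟩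

/-- A map `ι : K(G) → H` is straight if it is linear on each edge of `K(G)`. -/
def StraightOnKG {G H : Type*} [MetricSpace H] (ι : KG G → H) : Prop :=
  ∀ u v : G, ∀ t : ℝ, ∀ ht : t ∈ Set.Icc (0:ℝ) 1,
    dist (ι (kpt u v 0 ⟨le_refl _, zero_le_one⟩)) (ι (kpt u v t ht))
      = t * dist (ι (kpt u v 0 ⟨le_refl _, zero_le_one⟩))
          (ι (kpt u v 1 ⟨zero_le_one, le_refl _⟩))

/-- `r_S(x) = max {d(x, ρ(α)x) : α ∈ S}`. -/
noncomputable def rS {G H : Type*} [MetricSpace H] (S : Finset G) (hS : S.Nonempty)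
    (ρ : G → (H ≃ᵢ H)) (x : H) : ℝ :=
  S.sup' hS (fun α => dist x (ρ α x))

/-- The rescaling factor `λ = (max {1, d(ι(1_G), ι(s)) : s ∈ S})⁻¹`. -/
noncomputable def rescaleFactor {G H : Type*} [Group G] [MetricSpace H]
    (S : Finset G) (hS : S.Nonempty) (ι : KG G → H) : ℝ :=
  (max 1 (S.sup' hS fun s => dist (ι (vtx (1 : G))) (ι (vtx s))))⁻¹

end CompleteGraph

section KGAux
variable {G : Type*}

lemma kpt_zero (u v : G) (h : (0:ℝ) ∈ Set.Icc (0:ℝ) 1) : kpt u v 0 h = vtx u := by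
  apply Subtype.ext
  funext x
  simp [kpt, vtx, deltaComb]

lemma kpt_one (u v : G) (h : (1:ℝ) ∈ Set.Icc (0:ℝ) 1) : kpt u v 1 h = vtx v := by
  apply Subtype.ext
  funext x
  simp [kpt, vtx, deltaComb]

lemma kpt_swap (u v : G) (t : ℝ) (ht : t ∈ Set.Icc (0:ℝ) 1)
    (ht' : 1 - t ∈ Set.Icc (0:ℝ) 1) : kpt u v t ht = kpt v u (1 - t) ht' := by
  apply Subtype.ext
  funext x
  simp only [kpt, deltaComb]
  ring

lemma leftMul_vtx [Group G] (g h : G) : leftMulKG g (vtx h) = vtx (g * h) := by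
  apply Subtype.ext
  funext x
  show (vtx h).1 (g⁻¹ * x) = (vtx (g * h)).1 x
  simp [vtx, kpt, deltaComb, inv_mul_eq_iff_eq_mul]

lemma leftMul_kpt [Group G] (g u v : G) (t : ℝ) (ht : t ∈ Set.Icc (0:ℝ) 1) :
    leftMulKG g (kpt u v t ht) = kpt (g * u) (g * v) t ht := by
  apply Subtype.ext
  funext x
  show (kpt u v t ht).1 (g⁻¹ * x) = (kpt (g * u) (g * v) t ht).1 x
  simp [kpt, deltaComb, inv_mul_eq_iff_eq_mul]

end KGAux


/-- For a `ρ`-equivariant straight map `ι : K(G) → H` into a geodesic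
space with `Δ`-thin triangles, the left multiplication action of `G` on `K(G)` preserves
the pullback pseudo-metric, and translation lengths on `K(G)` and on `H` differ by at
most `28Δ`. -/
theorem translation_length_pullback_estimate {G : Type u} [Group G]
    {H : Type v} [MetricSpace H] [Nonempty H] {Δ : ℝ} (hΔ : 0 < Δ)
    (hgeo : GeodesicSpace H) (hthin : ThinTriangles H Δ)
    (ρ : G →* (H ≃ᵢ H)) (ι : KG G → H)
    (hstraight : StraightOnKG ι)
    (hequiv : ∀ g : G, ∀ p : KG G, ι (leftMulKG g p) = ρ g (ι p)) :
    (∀ g : G, ∀ p q : KG G,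
      dist (ι (leftMulKG g p)) (ι (leftMulKG g q)) = dist (ι p) (ι q)) ∧
    (∀ g : G,
      |(⨅ p : KG G, dist (ι p) (ι (leftMulKG g p))) - translationLength (ρ g)|
        ≤ 28 * Δ) := by
  haveI : Nonempty (KG G) := ⟨vtx 1⟩
  have hdistpres : ∀ g : G, ∀ p q : KG G,
      dist (ι (leftMulKG g p)) (ι (leftMulKG g q)) = dist (ι p) (ι q) := by
    intro g p q
    rw [hequiv g p, hequiv g q, (ρ g).dist_eq]
  refine ⟨hdistpres, fun g => ?_⟩
  set τ : H ≃ᵢ H := ρ g with hτ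
  have hequiv' : ∀ p : KG G, ι (leftMulKG g p) = τ (ι p) := fun p => hequiv g p
  set a : H := ι (vtx (1:G)) with ha
  have hbd : BddBelow (Set.range fun x : H => dist x (τ x)) :=
    ⟨0, by rintro _ ⟨x, rfl⟩; exact dist_nonneg⟩
  have hbdK : BddBelow (Set.range fun p : KG G => dist (ι p) (ι (leftMulKG g p))) :=
    ⟨0, by rintro _ ⟨p, rfl⟩; exact dist_nonneg⟩
  set tH := translationLength τ with htHdef
  set tK := ⨅ p : KG G, dist (ι p) (ι (leftMulKG g p)) with htKdef
  have htH0 : 0 ≤ tH := le_ciInf fun x => dist_nonneg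
  have hlow : tH ≤ tK := by
    refine le_ciInf fun p => ?_
    rw [hequiv' p]
    exact ciInf_le hbd (ι p)
  have hKle : ∀ p : KG G, tK ≤ dist (ι p) (ι (leftMulKG g p)) := fun p => ciInf_le hbdK p
  obtain ⟨x, hx⟩ : ∃ x : H, dist x (τ x) < tH + Δ :=
    exists_lt_of_ciInf_lt (show (⨅ y : H, dist y (τ y)) < tH + Δ from by
      change translationLength τ < tH + Δ
      rw [← htHdef]; linarith)
  have hvg : ι (vtx g) = τ a := by
    have h1 : leftMulKG g (vtx (1:G)) = vtx g := by rw [leftMul_vtx, mul_one]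
    rw [← h1, hequiv' (vtx (1:G))]
  obtain ⟨γ, hγ⟩ := hgeo a (τ a)
  obtain ⟨u, hu, hdisp⟩ := exists_small_displacement hΔ hgeo hthin τ hγ x
  set D := dist a (τ a) with hD
  by_cases hD0 : D = 0
  · have hK0 : tK ≤ 0 := by
      have h2 := hKle (vtx (1:G))
      rw [hequiv' (vtx (1:G)), ← ha] at h2
      rw [← hD, hD0] at h2
      exact h2
    have hKz : tK = 0 := le_antisymm hK0 (htH0.trans hlow)
    have hHz : tH = 0 := le_antisymm (hlow.trans hK0) htH0
    rw [hKz, hHz]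
    rw [sub_zero, abs_zero]
    linarith
  · have hDpos : 0 < D := lt_of_le_of_ne dist_nonneg (Ne.symm hD0)
    set t := u / D with htdef
    have htIcc : t ∈ Set.Icc (0:ℝ) 1 :=
      ⟨div_nonneg hu.1 hDpos.le, (div_le_one hDpos).mpr hu.2⟩
    set p := kpt (1:G) g t htIcc with hp
    set z := ι p with hz
    have haz : dist a z = u := by
      have h1 := hstraight 1 g t htIcc
      rw [show kpt (1:G) g 0 ⟨le_refl _, zero_le_one⟩ = vtx 1 from kpt_zero _ _ _,
        show kpt (1:G) g 1 ⟨zero_le_one, le_refl _⟩ = vtx g from kpt_one _ _ _] at h1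
      rw [hvg, ← ha, ← hD] at h1
      have hkp : kpt (1:G) g t htIcc = p := hp.symm
      rw [hkp, ← hz] at h1
      rw [h1, htdef, div_mul_cancel₀ u hD0]
    have hzb : dist z (τ a) = D - u := by
      have ht' : 1 - t ∈ Set.Icc (0:ℝ) 1 := ⟨by linarith [htIcc.2], by linarith [htIcc.1]⟩
      have h1 := hstraight g 1 (1 - t) ht'
      rw [show kpt g (1:G) 0 ⟨le_refl _, zero_le_one⟩ = vtx g from kpt_zero _ _ _,
        show kpt g (1:G) 1 ⟨zero_le_one, le_refl _⟩ = vtx 1 from kpt_one _ _ _] at h1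
      have hsw : kpt g (1:G) (1 - t) ht' = p := by
        rw [hp, kpt_swap 1 g t htIcc ht']
      rw [hsw, hvg, ← hz, ← ha] at h1
      rw [dist_comm (τ a) a, ← hD] at h1
      rw [dist_comm z (τ a), h1, htdef]
      field_simp
    obtain ⟨γ', hγ', hγ'u⟩ := geodesic_concat hgeo hu haz hzb
    have hclose : dist z (γ u) ≤ 2 * Δ := by
      have h2 := two_geodesics hΔ.le hthin hγ hγ' hu
      rwa [hγ'u] at h2
    have hzdisp : dist z (τ z) ≤ tH + 23 * Δ := by
      calc dist z (τ z)
          ≤ dist z (γ u) + dist (γ u) (τ (γ u)) + dist (τ (γ u)) (τ z) :=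
            dist_triangle4 _ _ _ _
        _ ≤ 2 * Δ + (dist x (τ x) + 18 * Δ) + 2 * Δ := by
            refine add_le_add (add_le_add hclose hdisp) ?_
            rw [τ.dist_eq, dist_comm]
            exact hclose
        _ ≤ tH + 23 * Δ := by linarith
    have hKfin : tK ≤ tH + 23 * Δ := by
      have h2 := hKle p
      rw [hequiv' p, ← hz] at h2
      exact h2.trans hzdisp
    rw [abs_le]
    constructor <;> linarith
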